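/- Let I ⊆ ℝ be an interval and let γ : I → ℝ² be an injective unit-speed curve of class C³ whose curvature satisfies κ(s) > 0 for all s ∈ I. Suppose that for all s, t ∈ I one has (κ(s)/2)·‖γ(s) − γ(t)‖² − ⟨γ(s) − γ(t), ν(s)⟩ ≥ 0 (i.e. the inscribed radius is at least 1/κ at every point). Then κ is constant on I. -/

import Mathlib

open Real Set Filter Topology

lemma half_lemma (ψ ψ1 ψ2 : ℝ → ℝ) (x c ε : ℝ) (hε : 0 < ε)
    (h0 : ∀ t, HasDerivAt ψ (ψ1 t) t) (h1 : ∀ t, HasDerivAt ψ1 (ψ2 t) t)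
    (h2 : HasDerivAt ψ2 c x) (hψx : ψ x = 0) (h1x : ψ1 x = 0) (h2x : ψ2 x = 0)
    (hpos : ∀ t, |t - x| < ε → 0 ≤ ψ t) : 0 ≤ c := by
  by_contra hc
  push_neg at hc
  have hs := hasDerivAt_iff_tendsto_slope.mp h2
  have hev : ∀ᶠ t in 𝓝[≠] x, slope ψ2 x t < 0 := hs.eventually (eventually_lt_nhds hc)
  rw [Filter.eventually_iff, Metric.mem_nhdsWithin_iff] at hev
  obtain ⟨δ, hδ, hδ'⟩ := hev
  set b := x + min δ ε / 2 with hb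
  have hmin : 0 < min δ ε := lt_min hδ hε
  have hxb : x < b := by rw [hb]; linarith
  have hsub : ∀ t ∈ Ioo x b, ψ2 t < 0 := by
    intro t ht
    have hne : t ≠ x := ne_of_gt ht.1
    have hdist : dist t x < δ := by
      rw [Real.dist_eq, abs_of_pos (by linarith [ht.1] : (0:ℝ) < t - x)]
      have : t < b := ht.2
      have : t - x < min δ ε / 2 := by rw [hb] at this; linarith
      linarith [min_le_left δ ε]
    have hsl : slope ψ2 x t < 0 := hδ' ⟨Metric.mem_ball.mpr hdist, hne⟩
    rw [slope_def_field, h2x, sub_zero] at hsl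
    rcases div_neg_iff.mp hsl with ⟨_, hb'⟩ | ⟨h, _⟩
    · linarith [ht.1]
    · exact h
  have hanti1 : StrictAntiOn ψ1 (Icc x b) := by
    apply strictAntiOn_of_deriv_neg (convex_Icc _ _)
      (fun t _ => (h1 t).continuousAt.continuousWithinAt)
    intro t ht
    rw [interior_Icc] at ht
    rw [(h1 t).deriv]
    exact hsub t ht
  have h1neg : ∀ t ∈ Ioo x b, ψ1 t < 0 := by
    intro t ht
    have := hanti1 (left_mem_Icc.mpr hxb.le) ⟨ht.1.le, ht.2.le⟩ ht.1
    rwa [h1x] at this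
  have hanti0 : StrictAntiOn ψ (Icc x b) := by
    apply strictAntiOn_of_deriv_neg (convex_Icc _ _)
      (fun t _ => (h0 t).continuousAt.continuousWithinAt)
    intro t ht
    rw [interior_Icc] at ht
    rw [(h0 t).deriv]
    exact h1neg t ht
  have hψb : ψ b < 0 := by
    have := hanti0 (left_mem_Icc.mpr hxb.le) (right_mem_Icc.mpr hxb.le) hxb
    rwa [hψx] at this
  have : |b - x| < ε := by
    rw [abs_of_pos (by linarith)]
    rw [hb]
    have := min_le_right δ ε
    linarith
  linarith [hpos b this]

lemma third_zero (ψ ψ1 ψ2 : ℝ → ℝ) (x c ε : ℝ) (hε : 0 < ε)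
    (h0 : ∀ t, HasDerivAt ψ (ψ1 t) t) (h1 : ∀ t, HasDerivAt ψ1 (ψ2 t) t)
    (h2 : HasDerivAt ψ2 c x) (hψx : ψ x = 0) (h1x : ψ1 x = 0) (h2x : ψ2 x = 0)
    (hpos : ∀ t, |t - x| < ε → 0 ≤ ψ t) : c = 0 := by
  have hge := half_lemma ψ ψ1 ψ2 x c ε hε h0 h1 h2 hψx h1x h2x hpos
  have hi : ∀ t : ℝ, HasDerivAt (fun u : ℝ => 2 * x - u) (-1) t := fun t => by
    simpa using (hasDerivAt_id t).const_sub (2 * x)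
  have hle : 0 ≤ -c := by
    apply half_lemma (fun u => ψ (2 * x - u)) (fun u => -ψ1 (2 * x - u))
      (fun u => ψ2 (2 * x - u)) x (-c) ε hε
    · intro t
      have := (h0 (2 * x - t)).comp t (hi t)
      -- HasDerivAt (ψ ∘ i) (ψ1 (2x - t) * -1) t
      refine this.congr_deriv ?_
      ring
    · intro t
      have := ((h1 (2 * x - t)).comp t (hi t)).neg
      refine this.congr_deriv ?_
      ring
    · have h2' : HasDerivAt ψ2 c (2 * x - x) := by
        rw [show 2 * x - x = x by ring]; exact h2
      have := h2'.comp x (hi x)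
      refine this.congr_deriv ?_
      ring
    · simpa [show 2 * x - x = x by ring] using hψx
    · simpa [show 2 * x - x = x by ring] using h1x
    · simpa [show 2 * x - x = x by ring] using h2x
    · intro t ht
      apply hpos
      rw [show 2 * x - t - x = -(t - x) by ring, abs_neg]
      exact ht
  linarith

noncomputable section

/-- The second derivative of a plane curve, componentwise. -/
def d2 (γ : ℝ → ℝ × ℝ) (s : ℝ) : ℝ × ℝ :=
  (deriv (fun u => (deriv γ u).1) s, deriv (fun u => (deriv γ u).2) s)

/-- The outward unit normal `ν(s) = (γ'₂(s), −γ'₁(s))` of a unit-speed plane curve. -/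
def nor (γ : ℝ → ℝ × ℝ) (s : ℝ) : ℝ × ℝ := ((deriv γ s).2, -(deriv γ s).1)

/-- The geodesic curvature `κ(s) = γ'₁(s)·γ''₂(s) − γ'₂(s)·γ''₁(s)` of a unit-speed
plane curve. -/
def curv (γ : ℝ → ℝ × ℝ) (s : ℝ) : ℝ :=
  (deriv γ s).1 * (d2 γ s).2 - (deriv γ s).2 * (d2 γ s).1

/-- Euclidean inner product on `ℝ²`. -/
def dot (v w : ℝ × ℝ) : ℝ := v.1 * w.1 + v.2 * w.2

/-- Squared Euclidean norm on `ℝ²`. -/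
def nsq (v : ℝ × ℝ) : ℝ := v.1 ^ 2 + v.2 ^ 2

/-- If `γ` is an injective unit-speed `C³` curve on an interval `I` with
`κ > 0`, whose inscribed radius is at least `1/κ` at every point, then `κ` is constant
on `I`. -/
theorem stmt0 (I : Set ℝ) (hI : Convex ℝ I) (γ : ℝ → ℝ × ℝ)
    (hinj : Set.InjOn γ I) (hsm : ContDiff ℝ 3 γ)
    (hunit : ∀ s ∈ I, nsq (deriv γ s) = 1)
    (hκpos : ∀ s ∈ I, 0 < curv γ s)
    (hin : ∀ s ∈ I, ∀ t ∈ I,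
      curv γ s / 2 * nsq (γ s - γ t) - dot (γ s - γ t) (nor γ s) ≥ 0) :
    ∀ s ∈ I, ∀ t ∈ I, curv γ s = curv γ t := by
  -- component functions and their derivatives
  set f1 : ℝ → ℝ := fun u => (γ u).1 with hf1def
  set f2 : ℝ → ℝ := fun u => (γ u).2 with hf2def
  have hdiff : Differentiable ℝ γ := hsm.differentiable (by norm_num)
  have hγ' : ∀ u, HasDerivAt γ (deriv γ u) u := fun u => (hdiff u).hasDerivAt
  have hc1 : ContDiff ℝ 3 f1 := contDiff_fst.comp hsm
  have hc2 : ContDiff ℝ 3 f2 := contDiff_snd.comp hsm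
  have hd1 : ∀ u, deriv γ u = (deriv f1 u, deriv f2 u) := by
    intro u
    have a : HasDerivAt f1 ((deriv γ u).1) u := (hγ' u).fst
    have b : HasDerivAt f2 ((deriv γ u).2) u := (hγ' u).snd
    exact Prod.ext a.deriv.symm b.deriv.symm
  set F1 : ℝ → ℝ := deriv f1 with hF1def
  set F2 : ℝ → ℝ := deriv f2 with hF2def
  have hcF1 : ContDiff ℝ 2 F1 := ((contDiff_succ_iff_deriv (n := 2)).mp (by exact_mod_cast hc1)).2.2
  have hcF2 : ContDiff ℝ 2 F2 := ((contDiff_succ_iff_deriv (n := 2)).mp (by exact_mod_cast hc2)).2.2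
  set G1 : ℝ → ℝ := deriv F1 with hG1def
  set G2 : ℝ → ℝ := deriv F2 with hG2def
  have hcG1 : ContDiff ℝ 1 G1 := ((contDiff_succ_iff_deriv (n := 1)).mp (by exact_mod_cast hcF1)).2.2
  have hcG2 : ContDiff ℝ 1 G2 := ((contDiff_succ_iff_deriv (n := 1)).mp (by exact_mod_cast hcF2)).2.2
  set H1 : ℝ → ℝ := deriv G1 with hH1def
  set H2 : ℝ → ℝ := deriv G2 with hH2def
  have hD1 : ∀ u, HasDerivAt f1 (F1 u) u := fun u => ((hc1.differentiable (by norm_num)) u).hasDerivAt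
  have hD2 : ∀ u, HasDerivAt f2 (F2 u) u := fun u => ((hc2.differentiable (by norm_num)) u).hasDerivAt
  have hDF1 : ∀ u, HasDerivAt F1 (G1 u) u := fun u => ((hcF1.differentiable (by norm_num)) u).hasDerivAt
  have hDF2 : ∀ u, HasDerivAt F2 (G2 u) u := fun u => ((hcF2.differentiable (by norm_num)) u).hasDerivAt
  have hDG1 : ∀ u, HasDerivAt G1 (H1 u) u := fun u => ((hcG1.differentiable (by norm_num)) u).hasDerivAt
  have hDG2 : ∀ u, HasDerivAt G2 (H2 u) u := fun u => ((hcG2.differentiable (by norm_num)) u).hasDerivAt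
  have hcurv : ∀ u, curv γ u = F1 u * G2 u - F2 u * G1 u := by
    intro u
    have e1 : (fun v => (deriv γ v).1) = F1 := by
      funext v; rw [hd1 v]
    have e2 : (fun v => (deriv γ v).2) = F2 := by
      funext v; rw [hd1 v]
    simp only [curv, d2, hd1 u, e1, e2]
    rfl
  -- curvature has zero derivative at interior points
  have key : ∀ x ∈ interior I, HasDerivAt (curv γ) 0 x := by
    intro x hx
    obtain ⟨ε, hε, hball⟩ := Metric.isOpen_iff.mp isOpen_interior x hx
    have hxI : x ∈ I := interior_subset hx
    -- derivative of the unit-speed relation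
    have hq : F1 x * G1 x + F2 x * G2 x = 0 := by
      have hqd : HasDerivAt (fun u => F1 u ^ 2 + F2 u ^ 2)
          (2 * F1 x * G1 x + 2 * F2 x * G2 x) x := by
        have := (((hDF1 x).pow 2).add ((hDF2 x).pow 2))
        refine this.congr_deriv ?_
        ring
      have heq : (fun u => F1 u ^ 2 + F2 u ^ 2) =ᶠ[nhds x] (fun _ => (1 : ℝ)) := by
        filter_upwards [isOpen_interior.mem_nhds hx] with y hy
        have := hunit y (interior_subset hy)
        rw [nsq, hd1 y] at this
        exact this
      have h0 : deriv (fun u => F1 u ^ 2 + F2 u ^ 2) x = 0 := by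
        rw [heq.deriv_eq]
        simp
      rw [hqd.deriv] at h0
      linarith
    have hu1 : F1 x ^ 2 + F2 x ^ 2 = 1 := by
      have := hunit x hxI
      rw [nsq, hd1 x] at this
      exact this
    -- the comparison function ψ and its derivatives
    set k : ℝ := curv γ x with hkdef
    set ψ : ℝ → ℝ := fun t => k / 2 * ((f1 x - f1 t) ^ 2 + (f2 x - f2 t) ^ 2) -
      ((f1 x - f1 t) * F2 x + (f2 x - f2 t) * (-F1 x)) with hψdef
    set ψ1 : ℝ → ℝ := fun t => -k * ((f1 x - f1 t) * F1 t + (f2 x - f2 t) * F2 t) +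
      (F1 t * F2 x + F2 t * (-F1 x)) with hψ1def
    set ψ2 : ℝ → ℝ := fun t => k * (F1 t ^ 2 + F2 t ^ 2 - (f1 x - f1 t) * G1 t -
      (f2 x - f2 t) * G2 t) + (G1 t * F2 x + G2 t * (-F1 x)) with hψ2def
    set c : ℝ := k * (3 * F1 x * G1 x + 3 * F2 x * G2 x) + (H1 x * F2 x + H2 x * (-F1 x))
      with hcdef
    have hDψ : ∀ t, HasDerivAt ψ (ψ1 t) t := by
      intro t
      have A : HasDerivAt (fun t => f1 x - f1 t) (-F1 t) t := (hD1 t).const_sub _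
      have B : HasDerivAt (fun t => f2 x - f2 t) (-F2 t) t := (hD2 t).const_sub _
      have := (((A.pow 2).add (B.pow 2)).const_mul (k / 2)).sub
        ((A.mul_const (F2 x)).add (B.mul_const (-F1 x)))
      refine this.congr_deriv ?_
      simp [hψ1def]
      ring
    have hDψ1 : ∀ t, HasDerivAt ψ1 (ψ2 t) t := by
      intro t
      have A : HasDerivAt (fun t => f1 x - f1 t) (-F1 t) t := (hD1 t).const_sub _
      have B : HasDerivAt (fun t => f2 x - f2 t) (-F2 t) t := (hD2 t).const_sub _
      have := (((A.mul (hDF1 t)).add (B.mul (hDF2 t))).const_mul (-k)).add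
        (((hDF1 t).mul_const (F2 x)).add ((hDF2 t).mul_const (-F1 x)))
      refine this.congr_deriv ?_
      simp [hψ2def]
      ring
    have hDψ2 : HasDerivAt ψ2 c x := by
      have A : HasDerivAt (fun t => f1 x - f1 t) (-F1 x) x := (hD1 x).const_sub _
      have B : HasDerivAt (fun t => f2 x - f2 t) (-F2 x) x := (hD2 x).const_sub _
      have inner := ((((hDF1 x).pow 2).add ((hDF2 x).pow 2)).sub
        (A.mul (hDG1 x))).sub (B.mul (hDG2 x))
      have := (inner.const_mul k).add
        (((hDG1 x).mul_const (F2 x)).add ((hDG2 x).mul_const (-F1 x)))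
      refine this.congr_deriv ?_
      rw [hcdef]
      push_cast
      ring
    have hψx : ψ x = 0 := by
      simp [hψdef]
    have hψ1x : ψ1 x = 0 := by
      simp [hψ1def]
      ring
    have hψ2x : ψ2 x = 0 := by
      have hk : k = F1 x * G2 x - F2 x * G1 x := hcurv x
      simp only [hψ2def, sub_self, zero_mul, sub_zero]
      rw [hu1, hk]
      ring
    have hpos : ∀ t, |t - x| < ε → 0 ≤ ψ t := by
      intro t ht
      have htI : t ∈ I := interior_subset (hball (by rwa [Metric.mem_ball, Real.dist_eq]))
      have := hin x hxI t htI
      have hexp : curv γ x / 2 * nsq (γ x - γ t) - dot (γ x - γ t) (nor γ x) = ψ t := by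
        simp only [nsq, dot, nor, hd1 x, Prod.fst_sub, Prod.snd_sub, hψdef, hkdef]
        rfl
      linarith [hexp ▸ this]
    have hc0 : c = 0 := third_zero ψ ψ1 ψ2 x c ε hε hDψ hDψ1 hDψ2 hψx hψ1x hψ2x hpos
    -- derivative of curvature
    have hκd : HasDerivAt (curv γ)
        (G1 x * G2 x + F1 x * H2 x - (G2 x * G1 x + F2 x * H1 x)) x := by
      have heq : curv γ = fun u => F1 u * G2 u - F2 u * G1 u := funext hcurv
      rw [heq]
      exact ((hDF1 x).mul (hDG2 x)).sub ((hDF2 x).mul (hDG1 x))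
    convert hκd using 1
    rw [hcdef] at hc0
    linear_combination hc0 - 3 * k * hq
  -- conclusion via the mean value theorem
  have hcont : Continuous (curv γ) := by
    have heq : curv γ = fun u => F1 u * G2 u - F2 u * G1 u := funext hcurv
    rw [heq]
    exact ((hcF1.continuous.mul hcG2.continuous).sub (hcF2.continuous.mul hcG1.continuous))
  have main : ∀ a b : ℝ, a ∈ I → b ∈ I → a < b → curv γ a = curv γ b := by
    intro a b ha hb hab
    have hIcc : Icc a b ⊆ I := hI.ordConnected.out ha hb
    have hIoo : Ioo a b ⊆ interior I := interior_maximal (Ioo_subset_Icc_self.trans hIcc) isOpen_Ioo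
    obtain ⟨ξ, hξ, h0⟩ := exists_hasDerivAt_eq_slope (curv γ) (fun _ => 0) hab
      hcont.continuousOn (fun y hy => key y (hIoo hy))
    have hba : b - a ≠ 0 := by linarith [hab]
    field_simp at h0
    linarith
  intro s hs t ht
  rcases lt_trichotomy s t with h | h | h
  · exact main s t hs ht h
  · rw [h]
  · exact (main t s ht hs h).symm

end
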